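/- Let (C, F) be a pointed connected atomic site. Then the functor F is faithful, and F reflects isomorphisms: if f : X ⟶ Y is a morphism of C such that F(f) is a bijection, then f is an isomorphism. -/

import Mathlib

open CategoryTheory

universe u v w

/-- A pointed connected atomic site: a small category `C` together with a
set-valued functor `F` such that (i) every morphism is a strict epimorphism,
(ii) every `F X` is nonempty, (iii) `F` sends morphisms to surjections, and
(iv) the category of elements of `F` is cofiltered. -/
structure IsPCAS {C : Type u} [Category.{v} C] (F : C ⥤ Type w) : Prop where
  strict_epi : ∀ {Y X Z : C} (f : Y ⟶ X) (g : Y ⟶ Z),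
    (∀ {W : C} (p q : W ⟶ Y), p ≫ f = q ≫ f → p ≫ g = q ≫ g) →
    ∃! u : X ⟶ Z, f ≫ u = g
  nonempty : ∀ X : C, Nonempty (F.obj X)
  surjective : ∀ {X Y : C} (f : X ⟶ Y), Function.Surjective (F.map f)
  cofiltered : IsCofiltered F.Elements

/-- For a pointed connected atomic site `(C, F)`, the functor `F` is faithful
and reflects isomorphisms. -/
theorem stmt5 {C : Type u} [Category.{v} C] (F : C ⥤ Type w)
    (hF : IsPCAS F) :
    F.Faithful ∧
    (∀ {X Y : C} (f : X ⟶ Y), Function.Bijective (F.map f) → IsIso f) := by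
  -- every morphism is epi
  have epi : ∀ {A B : C} (h : A ⟶ B), Epi h := by
    intro A B h
    constructor
    intro Z u v huv
    obtain ⟨w, -, hu⟩ := hF.strict_epi h (h ≫ u) (fun p q hpq => by
      rw [← Category.assoc, hpq, Category.assoc])
    exact (hu u rfl).trans (hu v huv.symm).symm
  have faith : F.Faithful := by
    constructor
    intro X Y f g hfg
    obtain ⟨x⟩ := hF.nonempty X
    haveI := hF.cofiltered
    let a : F.Elements := ⟨X, x⟩
    let b : F.Elements := ⟨Y, F.map f x⟩
    let f' : a ⟶ b := ⟨f, rfl⟩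
    let g' : a ⟶ b := ⟨g, by rw [← hfg]⟩
    have hcond := IsCofiltered.eq_condition f' g'
    have h : (IsCofiltered.eqHom f' g').1 ≫ f = (IsCofiltered.eqHom f' g').1 ≫ g :=
      congrArg Subtype.val hcond
    haveI := epi (IsCofiltered.eqHom f' g').1
    exact (cancel_epi (IsCofiltered.eqHom f' g').1).mp h
  refine ⟨faith, fun {X Y} f hbij => ?_⟩
  have mono : ∀ {W : C} (p q : W ⟶ X), p ≫ f = q ≫ f → p = q := by
    intro W p q h
    apply faith.map_injective
    have h2 : F.map p ≫ F.map f = F.map q ≫ F.map f := by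
      rw [← F.map_comp, ← F.map_comp, h]
    ext w
    apply hbij.injective
    have h3 := ConcreteCategory.congr_hom h2 w
    simpa using h3
  obtain ⟨g, hg, -⟩ := hF.strict_epi f (𝟙 X) (fun p q h => by
    simpa using mono p q h)
  haveI := epi f
  have hgf : g ≫ f = 𝟙 Y := by
    rw [← cancel_epi f, ← Category.assoc, hg, Category.id_comp, Category.comp_id]
  exact ⟨g, hg, hgf⟩
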